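/- Let p be a prime number and let A be a commutative ring with bounded p^∞-torsion, with bound N (every p-power-torsion element of A is killed by p^N). Then the p-adic completion Â of A has bounded p^∞-torsion with the same bound: every element of Â killed by some power of p is killed by p^N. -/

import Mathlib

/-- **The `p`-adic completion has bounded `p^∞`-torsion with the same bound.**
Let `p` be a prime and `A` a commutative ring with bounded `p^∞`-torsion, with bound `N`
(every element of `A` killed by some power of `p` is killed by `p^N`).  Then every element
of the `p`-adic completion `Â = AdicCompletion (Ideal.span {p}) A` killed by some power of
`p` is killed by `p^N`. -/
theorem padicCompletion_boundedTorsion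
    (p : ℕ) (hp : p.Prime) (A : Type*) [CommRing A] (N : ℕ)
    (hbd : ∀ a : A, (∃ ν : ℕ, (p : A) ^ ν * a = 0) → (p : A) ^ N * a = 0) :
    ∀ x : AdicCompletion (Ideal.span {(p : A)}) A,
      (∃ ν : ℕ, (p : AdicCompletion (Ideal.span {(p : A)}) A) ^ ν * x = 0) →
        (p : AdicCompletion (Ideal.span {(p : A)}) A) ^ N * x = 0 := by
  set I := Ideal.span {(p : A)} with hI
  have hsmul : ∀ m : ℕ, (I ^ m • ⊤ : Ideal A) = I ^ m := fun m => by ext x; simp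
  rintro x ⟨ν, hν⟩
  apply AdicCompletion.ext
  intro n
  rw [AdicCompletion.val_zero]
  -- lift x.val (n + ν)
  obtain ⟨a, ha⟩ := Submodule.Quotient.mk_surjective _ (x.val (n + ν))
  have key : (x.val (n + ν) : A ⧸ (I ^ (n + ν) • ⊤ : Submodule A A)) = Submodule.Quotient.mk a :=
    ha.symm
  -- from p^ν x = 0 at level n + ν
  have h1 : ((p : AdicCompletion I A) ^ ν * x).val (n + ν) = 0 := by rw [hν]; rfl
  have h2 : (p : A) ^ ν * a ∈ (I ^ (n + ν) • ⊤ : Submodule A A) := by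
    have : ((p : AdicCompletion I A) ^ ν * x).val (n + ν)
        = Submodule.Quotient.mk ((p : A) ^ ν * a) := by
      rw [AdicCompletion.val_mul, key]; rfl
    rw [this] at h1
    exact (Submodule.Quotient.mk_eq_zero _).mp h1
  rw [show (I ^ (n + ν) • ⊤ : Submodule A A) = (I ^ (n + ν) • ⊤ : Ideal A) from rfl,
    hsmul, hI, Ideal.span_singleton_pow, Ideal.mem_span_singleton] at h2
  obtain ⟨b, hb⟩ := h2
  -- torsion element
  have htor : (p : A) ^ ν * (a - (p : A) ^ n * b) = 0 := by
    rw [mul_sub, hb]; ring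
  have hNa : (p : A) ^ N * (a - (p : A) ^ n * b) = 0 := hbd _ ⟨ν, htor⟩
  have hNa' : (p : A) ^ N * a ∈ (I ^ n • ⊤ : Submodule A A) := by
    rw [show (I ^ n • ⊤ : Submodule A A) = (I ^ n • ⊤ : Ideal A) from rfl,
      hsmul, hI, Ideal.span_singleton_pow, Ideal.mem_span_singleton]
    refine ⟨(p : A) ^ N * b, ?_⟩
    rw [mul_sub] at hNa
    linear_combination hNa
  -- x.val n is the image of x.val (n + ν)
  have hxn : x.val n = Submodule.Quotient.mk a := by
    rw [← x.property (Nat.le_add_right n ν), key]; rfl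
  have : ((p : AdicCompletion I A) ^ N * x).val n
      = Submodule.Quotient.mk ((p : A) ^ N * a) := by
    rw [AdicCompletion.val_mul, hxn]; rfl
  rw [this, Pi.zero_apply, Submodule.Quotient.mk_eq_zero]
  exact hNa'
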